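/- Let m ≥ 4 and S = conv{(0,0),(a,0),(b,1−b),(0,1)} ⊂ ℝ₊² with 0 < a < 1/m, a < b < 1, m(1−b) < 1, and (b−a)/(1−b) > m−2−am. Then for each integer 1 ≤ k ≤ m−3, the integral ∫_{ℂ²} |z₁|^{2k} e^{−2m H_S(z)} dλ(z) is finite, yet (k,0) ∉ mS. -/

import Mathlib

open Pointwise MeasureTheory

/-- Support function of `S`. -/
noncomputable def suppFn {n : ℕ} (S : Set (Fin n → ℝ)) (ξ : Fin n → ℝ) : ℝ :=
  sSup ((fun s => ∑ j, s j * ξ j) '' S)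

/-- Logarithmic supporting function of `S` on `(ℂ*)ⁿ`. -/
noncomputable def HS {n : ℕ} (S : Set (Fin n → ℝ)) (z : Fin n → ℂ) : ℝ :=
  suppFn S (fun j => Real.log ‖z j‖)

lemma suppFn_hull_eq (a b : ℝ) (ξ : Fin 2 → ℝ) :
    suppFn (convexHull ℝ {![0, 0], ![a, 0], ![b, 1 - b], ![0, 1]}) ξ =
      max (max 0 (a * ξ 0)) (max (b * ξ 0 + (1 - b) * ξ 1) (ξ 1)) := by
  classical
  set V : Set (Fin 2 → ℝ) := {![0, 0], ![a, 0], ![b, 1 - b], ![0, 1]} with hV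
  set L : (Fin 2 → ℝ) → ℝ := fun s => ∑ j, s j * ξ j with hLdef
  have hlin : IsLinearMap ℝ L := by
    constructor
    · intro s t
      simp only [hLdef, Pi.add_apply, add_mul, Finset.sum_add_distrib]
    · intro r s
      simp only [hLdef, Pi.smul_apply, smul_eq_mul, Finset.mul_sum, mul_assoc]
  set M : ℝ := max (max 0 (a * ξ 0)) (max (b * ξ 0 + (1 - b) * ξ 1) (ξ 1)) with hM
  have hFin : ∀ s : Fin 2 → ℝ, L s = s 0 * ξ 0 + s 1 * ξ 1 := fun s => Fin.sum_univ_two _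
  have hv0 : L ![0, 0] = 0 := by simp [hFin]
  have hv1 : L ![a, 0] = a * ξ 0 := by simp [hFin]
  have hv2 : L ![b, 1 - b] = b * ξ 0 + (1 - b) * ξ 1 := by simp [hFin]
  have hv3 : L ![0, 1] = ξ 1 := by simp [hFin]
  have hub : ∀ s ∈ convexHull ℝ V, L s ≤ M := by
    intro s hs
    refine convexHull_min ?_ (convex_halfSpace_le hlin M) hs
    intro v hv
    simp only [hV, Set.mem_insert_iff, Set.mem_singleton_iff] at hv
    rcases hv with rfl | rfl | rfl | rfl
    · simp only [Set.mem_setOf_eq, hv0]; exact le_max_of_le_left (le_max_left _ _)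
    · simp only [Set.mem_setOf_eq, hv1]; exact le_max_of_le_left (le_max_right _ _)
    · simp only [Set.mem_setOf_eq, hv2]; exact le_max_of_le_right (le_max_left _ _)
    · simp only [Set.mem_setOf_eq, hv3]; exact le_max_of_le_right (le_max_right _ _)
  have hmem : ∀ v ∈ V, L v ∈ L '' convexHull ℝ V := fun v hv =>
    ⟨v, subset_convexHull ℝ V hv, rfl⟩
  have hbdd : BddAbove (L '' convexHull ℝ V) := by
    refine ⟨M, ?_⟩
    rintro y ⟨s, hs, rfl⟩
    exact hub s hs
  have h0V : ![(0:ℝ), 0] ∈ V := by simp [hV]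
  have h1V : ![a, (0:ℝ)] ∈ V := by simp [hV]
  have h2V : ![b, 1 - b] ∈ V := by simp [hV]
  have h3V : ![(0:ℝ), 1] ∈ V := by simp [hV]
  show sSup (L '' convexHull ℝ V) = M
  refine le_antisymm (csSup_le ⟨L ![0, 0], hmem _ h0V⟩ ?_) ?_
  · rintro y ⟨s, hs, rfl⟩
    exact hub s hs
  · refine max_le (max_le ?_ ?_) (max_le ?_ ?_)
    · rw [← hv0]; exact le_csSup hbdd (hmem _ h0V)
    · rw [← hv1]; exact le_csSup hbdd (hmem _ h1V)
    · rw [← hv2]; exact le_csSup hbdd (hmem _ h2V)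
    · rw [← hv3]; exact le_csSup hbdd (hmem _ h3V)

lemma hull_ub (a b : ℝ) (ha0 : 0 < a) (hab : a < b) (hb1 : b < 1) :
    ∀ s ∈ convexHull ℝ ({![0, 0], ![a, 0], ![b, 1 - b], ![0, 1]} : Set (Fin 2 → ℝ)),
      (1 - b) * s 0 - (b - a) * s 1 ≤ (1 - b) * a := by
  intro s hs
  have hlin : IsLinearMap ℝ (fun s : Fin 2 → ℝ => (1 - b) * s 0 - (b - a) * s 1) := by
    constructor
    · intro u v; simp only [Pi.add_apply]; ring
    · intro r u; simp only [Pi.smul_apply, smul_eq_mul]; ring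
  refine convexHull_min ?_ (convex_halfSpace_le hlin ((1 - b) * a)) hs
  intro v hv
  simp only [Set.mem_insert_iff, Set.mem_singleton_iff] at hv
  rcases hv with rfl | rfl | rfl | rfl <;>
    simp only [Set.mem_setOf_eq, Matrix.cons_val_zero, Matrix.cons_val_one, Matrix.head_cons] <;>
    nlinarith [mul_pos ha0 (show (0:ℝ) < 1 - b by linarith)]

lemma not_mem_smul (m : ℕ) (hm : 4 ≤ m) (a b : ℝ)
    (ha0 : 0 < a) (ham : a < 1 / (m : ℝ)) (hab : a < b) (hb1 : b < 1)
    (k : ℕ) (hk1 : 1 ≤ k) :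
    ![(k : ℝ), 0] ∉ (m : ℝ) • convexHull ℝ ({![0, 0], ![a, 0], ![b, 1 - b], ![0, 1]} :
        Set (Fin 2 → ℝ)) := by
  intro hmem
  rw [Set.mem_smul_set] at hmem
  obtain ⟨s, hs, hsm⟩ := hmem
  have hmpos : (0 : ℝ) < m := by positivity
  have h0 : (m : ℝ) * s 0 = k := by
    have := congrFun hsm 0
    simpa using this
  have h1 : (m : ℝ) * s 1 = 0 := by
    have := congrFun hsm 1
    simpa using this
  have hs1 : s 1 = 0 := by
    rcases mul_eq_zero.mp h1 with h | h
    · exact absurd h (by positivity)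
    · exact h
  have hub := hull_ub a b ha0 hab hb1 s hs
  rw [hs1] at hub
  have hs0 : s 0 ≤ a := by
    have hb' : 0 < 1 - b := by linarith
    nlinarith
  have ham' : a * m < 1 := (lt_div_iff₀ hmpos).mp ham
  have hk1r : (1 : ℝ) ≤ k := by exact_mod_cast hk1
  nlinarith

lemma key_ineq (m k : ℕ) (a b c : ℝ) (hb1 : b < 1) (ha0 : 0 < a) (hab : a < b)
    (hc0 : 0 < c) (hc2 : c ≤ 1 / 2) (hcb : (m : ℝ) * (1 - b) ≤ 1 - c)
    (hm : 4 ≤ m) (hk1 : 1 ≤ k) (hkm : (k : ℝ) + 3 ≤ m) (x y : ℝ) :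
    ((k : ℝ) + 1) * x + y + c * |x| + c * |y| ≤
      (m : ℝ) * max (max 0 (a * x)) (max (b * x + (1 - b) * y) y) := by
  set M : ℝ := max (max 0 (a * x)) (max (b * x + (1 - b) * y) y) with hMdef
  have hM0 : (0 : ℝ) ≤ M := le_max_of_le_left (le_max_left _ _)
  have hMb : b * x + (1 - b) * y ≤ M := le_max_of_le_right (le_max_left _ _)
  have hMy : y ≤ M := le_max_of_le_right (le_max_right _ _)
  have hmr : (4 : ℝ) ≤ m := by exact_mod_cast hm
  have hk1r : (1 : ℝ) ≤ k := by exact_mod_cast hk1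
  have hb0 : 0 < b := lt_trans ha0 hab
  have hKc : ((k : ℝ) + 1) + c ≤ (m : ℝ) * b := by nlinarith
  rcases le_total x 0 with hx | hx <;> rcases le_total y 0 with hy | hy
  · rw [abs_of_nonpos hx, abs_of_nonpos hy]
    nlinarith [mul_nonneg (by positivity : (0:ℝ) ≤ (m:ℝ)) hM0,
      mul_nonpos_of_nonneg_of_nonpos (by linarith : (0:ℝ) ≤ (k : ℝ) + 1 - c) hx,
      mul_nonpos_of_nonneg_of_nonpos (by linarith : (0:ℝ) ≤ 1 - c) hy]
  · rw [abs_of_nonpos hx, abs_of_nonneg hy]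
    nlinarith [mul_le_mul_of_nonneg_left hMy (by positivity : (0:ℝ) ≤ (m:ℝ)),
      mul_nonpos_of_nonneg_of_nonpos (by linarith : (0:ℝ) ≤ (k : ℝ) + 1 - c) hx,
      mul_le_mul_of_nonneg_right (by linarith : 1 + c ≤ (m:ℝ)) hy]
  · rw [abs_of_nonneg hx, abs_of_nonpos hy]
    nlinarith [mul_le_mul_of_nonneg_left hMb (by positivity : (0:ℝ) ≤ (m:ℝ)),
      mul_le_mul_of_nonneg_right hKc hx,
      mul_le_mul_of_nonpos_right hcb hy]
  · rw [abs_of_nonneg hx, abs_of_nonneg hy]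
    set s : ℝ := ((k : ℝ) + 1 + c) / b with hsdef
    have hs0 : 0 ≤ s := by positivity
    have hsb : s * b = (k : ℝ) + 1 + c := div_mul_cancel₀ _ (ne_of_gt hb0)
    have hsm : s ≤ (m : ℝ) := by
      rw [hsdef, div_le_iff₀ hb0]
      linarith
    have h1 : s * (b * x + (1 - b) * y) ≤ s * M := mul_le_mul_of_nonneg_left hMb hs0
    have h2 : ((m : ℝ) - s) * y ≤ ((m : ℝ) - s) * M :=
      mul_le_mul_of_nonneg_left hMy (by linarith)
    have h3 : s * (b * x + (1 - b) * y) + ((m : ℝ) - s) * y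
        = ((k : ℝ) + 1 + c) * x + ((m : ℝ) - ((k : ℝ) + 1 + c)) * y := by
      linear_combination (x - y) * hsb
    have h4 : (1 + c) * y ≤ ((m : ℝ) - ((k : ℝ) + 1 + c)) * y := by
      apply mul_le_mul_of_nonneg_right _ hy
      linarith
    nlinarith [h1, h2, h3, h4]

open Pointwise MeasureTheory Set

variable {c : ℝ}

/-- the 1-D profile -/
noncomputable def qfn (c : ℝ) (r : ℝ) : ℝ :=
  min (Real.exp ((c - 1) * Real.log r)) (Real.exp ((-1 - c) * Real.log r))

lemma qfn_eq_of_pos (c : ℝ) {r : ℝ} (hr : 0 < r) :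
    qfn c r = min (r ^ (c - 1)) (r ^ (-1 - c)) := by
  rw [qfn, Real.rpow_def_of_pos hr, Real.rpow_def_of_pos hr, mul_comm (Real.log r),
    mul_comm (Real.log r)]

noncomputable def pfn (c : ℝ) (t : ℝ) : ℝ := qfn c |t|

lemma qfn_nonneg (c r : ℝ) : 0 ≤ qfn c r :=
  le_min (Real.exp_nonneg _) (Real.exp_nonneg _)

lemma measurable_qfn (c : ℝ) : Measurable (qfn c) :=
  ((measurable_const.mul Real.measurable_log).exp).min
    ((measurable_const.mul Real.measurable_log).exp)

lemma measurable_pfn (c : ℝ) : Measurable (pfn c) :=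
  (measurable_qfn c).comp measurable_abs

lemma integrable_pfn (hc0 : 0 < c) : Integrable (pfn c) := by
  have hIoi : IntegrableOn (qfn c) (Ioi (0:ℝ)) := by
    have h01 : IntegrableOn (qfn c) (Ioc (0:ℝ) 1) := by
      have hg : IntegrableOn (fun t : ℝ => t ^ (c - 1)) (Ioc (0:ℝ) 1) := by
        have := intervalIntegral.intervalIntegrable_rpow' (a := 0) (b := 1) (r := c - 1) (by linarith)
        rwa [intervalIntegrable_iff, uIoc_of_le (by norm_num)] at this
      refine hg.mono' ((measurable_qfn c).aestronglyMeasurable) ?_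
      filter_upwards [ae_restrict_mem measurableSet_Ioc] with t ht
      rw [Real.norm_eq_abs, abs_of_nonneg (qfn_nonneg c t), qfn_eq_of_pos c ht.1]
      exact min_le_left _ _
    have h1i : IntegrableOn (qfn c) (Ioi (1:ℝ)) := by
      have hg : IntegrableOn (fun t : ℝ => t ^ (-1 - c)) (Ioi (1:ℝ)) :=
        integrableOn_Ioi_rpow_of_lt (by linarith) one_pos
      refine hg.mono' ((measurable_qfn c).aestronglyMeasurable) ?_
      filter_upwards [ae_restrict_mem measurableSet_Ioi] with t ht
      rw [Real.norm_eq_abs, abs_of_nonneg (qfn_nonneg c t),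
        qfn_eq_of_pos c (lt_trans one_pos (mem_Ioi.mp ht))]
      exact min_le_right _ _
    rw [← Ioc_union_Ioi_eq_Ioi (zero_le_one)]
    exact h01.union h1i
  have hIoi' : IntegrableOn (pfn c) (Ioi (0:ℝ)) := by
    refine hIoi.congr_fun (fun x hx => ?_) measurableSet_Ioi
    simp [pfn, abs_of_pos (mem_Ioi.mp hx)]
  have hIic : IntegrableOn (pfn c) (Iic (0:ℝ)) := by
    rw [← Measure.map_neg_eq_self (volume : Measure ℝ)]
    have hemb : MeasurableEmbedding fun x : ℝ => -x :=
      (Homeomorph.neg ℝ).measurableEmbedding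
    rw [hemb.integrableOn_map_iff]
    have : (pfn c ∘ fun x : ℝ => -x) = pfn c := by
      funext t; simp [pfn, Function.comp]
    rw [this]
    have : (fun x : ℝ => -x) ⁻¹' Iic 0 = Ici (0:ℝ) := by
      ext t; simp
    rw [this]
    exact Iff.mpr integrableOn_Ici_iff_integrableOn_Ioi hIoi'
  rw [← integrableOn_univ, ← Iic_union_Ioi (a := (0:ℝ))]
  exact hIic.union hIoi'

lemma pfn_bound (hc0 : 0 < c) (hc1 : c ≤ 1) (w : ℂ) (hre : w.re ≠ 0) (him : w.im ≠ 0) :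
    Real.exp (-2 * Real.log ‖w‖ - 2 * c * |Real.log ‖w‖|) ≤
      pfn c w.re * pfn c w.im := by
  have hw : w ≠ 0 := fun h => hre (by simp [h])
  set r : ℝ := ‖w‖ with hrdef
  have hr0 : 0 < r := norm_pos_iff.mpr hw
  set u : ℝ := |w.re| with hudef
  set v : ℝ := |w.im| with hvdef
  have hu0 : 0 < u := abs_pos.mpr hre
  have hv0 : 0 < v := abs_pos.mpr him
  have hur : u ≤ r := Complex.abs_re_le_norm w
  have hvr : v ≤ r := Complex.abs_im_le_norm w
  have huv : u * v ≤ r ^ 2 := by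
    have h1 : u ^ 2 + v ^ 2 = r ^ 2 := by
      rw [hrdef, hudef, hvdef, sq_abs, sq_abs, Complex.sq_norm, Complex.normSq_apply]; ring
    nlinarith [sq_nonneg (u - v)]
  have hpu : pfn c w.re = min (u ^ (c - 1)) (u ^ (-1 - c)) := by
    rw [pfn, ← hudef, qfn_eq_of_pos c hu0]
  have hpv : pfn c w.im = min (v ^ (c - 1)) (v ^ (-1 - c)) := by
    rw [pfn, ← hvdef, qfn_eq_of_pos c hv0]
  have hce : c - 1 ≤ 0 := by linarith
  have hce' : -1 - c ≤ 0 := by linarith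
  rcases le_total r 1 with hr1 | hr1
  · -- r ≤ 1 : LHS = r ^ (2c-2), u,v ≤ 1
    have hlog : Real.log r ≤ 0 := Real.log_nonpos hr0.le hr1
    have hLHS : Real.exp (-2 * Real.log r - 2 * c * |Real.log r|) = r ^ (2 * c - 2) := by
      rw [abs_of_nonpos hlog, Real.rpow_def_of_pos hr0]
      ring_nf
    rw [hLHS, hpu, hpv]
    have hu1 : u ≤ 1 := le_trans hur hr1
    have hv1 : v ≤ 1 := le_trans hvr hr1
    have hqu : min (u ^ (c - 1)) (u ^ (-1 - c)) = u ^ (c - 1) :=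
      min_eq_left (Real.rpow_le_rpow_of_exponent_ge hu0 hu1 (by linarith))
    have hqv : min (v ^ (c - 1)) (v ^ (-1 - c)) = v ^ (c - 1) :=
      min_eq_left (Real.rpow_le_rpow_of_exponent_ge hv0 hv1 (by linarith))
    rw [hqu, hqv, ← Real.mul_rpow hu0.le hv0.le]
    calc r ^ (2 * c - 2) = (r ^ 2) ^ (c - 1) := by
          rw [← Real.rpow_natCast r 2, ← Real.rpow_mul hr0.le]
          norm_num
          ring_nf
      _ ≤ (u * v) ^ (c - 1) :=
          Real.rpow_le_rpow_of_nonpos (by positivity) huv hce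
  · -- 1 ≤ r : LHS = r ^ (-2-2c)
    have hlog : 0 ≤ Real.log r := Real.log_nonneg hr1
    have hLHS : Real.exp (-2 * Real.log r - 2 * c * |Real.log r|) = r ^ (-2 - 2 * c) := by
      rw [abs_of_nonneg hlog, Real.rpow_def_of_pos hr0]
      ring_nf
    rw [hLHS, hpu, hpv]
    rcases le_total u 1 with hu1 | hu1 <;> rcases le_total v 1 with hv1 | hv1
    · -- u ≤ 1, v ≤ 1
      have hqu : min (u ^ (c - 1)) (u ^ (-1 - c)) = u ^ (c - 1) :=
        min_eq_left (Real.rpow_le_rpow_of_exponent_ge hu0 hu1 (by linarith))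
      have hqv : min (v ^ (c - 1)) (v ^ (-1 - c)) = v ^ (c - 1) :=
        min_eq_left (Real.rpow_le_rpow_of_exponent_ge hv0 hv1 (by linarith))
      rw [hqu, hqv]
      have h1 : r ^ (-2 - 2 * c) ≤ 1 :=
        Real.rpow_le_one_of_one_le_of_nonpos hr1 (by linarith)
      have h2 : (1:ℝ) ≤ u ^ (c - 1) * v ^ (c - 1) := by
        rw [← Real.mul_rpow hu0.le hv0.le]
        exact Real.one_le_rpow_of_pos_of_le_one_of_nonpos (by positivity)
          (mul_le_one₀ hu1 hv0.le hv1) hce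
      linarith
    · -- u ≤ 1 ≤ v
      have hqu : min (u ^ (c - 1)) (u ^ (-1 - c)) = u ^ (c - 1) :=
        min_eq_left (Real.rpow_le_rpow_of_exponent_ge hu0 hu1 (by linarith))
      have hqv : min (v ^ (c - 1)) (v ^ (-1 - c)) = v ^ (-1 - c) :=
        min_eq_right (Real.rpow_le_rpow_of_exponent_le hv1 (by linarith))
      rw [hqu, hqv]
      have h1 : r ^ (-2 - 2 * c) ≤ v ^ (-1 - c) := by
        calc r ^ (-2 - 2 * c) ≤ v ^ (-2 - 2 * c) :=
              Real.rpow_le_rpow_of_nonpos hv0 hvr (by linarith)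
          _ ≤ v ^ (-1 - c) := Real.rpow_le_rpow_of_exponent_le hv1 (by linarith)
      have h2 : (1:ℝ) ≤ u ^ (c - 1) :=
        Real.one_le_rpow_of_pos_of_le_one_of_nonpos hu0 hu1 hce
      calc r ^ (-2 - 2 * c) ≤ v ^ (-1 - c) := h1
        _ = 1 * v ^ (-1 - c) := (one_mul _).symm
        _ ≤ u ^ (c - 1) * v ^ (-1 - c) :=
            mul_le_mul_of_nonneg_right h2 (Real.rpow_nonneg hv0.le _)
    · -- v ≤ 1 ≤ u
      have hqu : min (u ^ (c - 1)) (u ^ (-1 - c)) = u ^ (-1 - c) :=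
        min_eq_right (Real.rpow_le_rpow_of_exponent_le hu1 (by linarith))
      have hqv : min (v ^ (c - 1)) (v ^ (-1 - c)) = v ^ (c - 1) :=
        min_eq_left (Real.rpow_le_rpow_of_exponent_ge hv0 hv1 (by linarith))
      rw [hqu, hqv]
      have h1 : r ^ (-2 - 2 * c) ≤ u ^ (-1 - c) := by
        calc r ^ (-2 - 2 * c) ≤ u ^ (-2 - 2 * c) :=
              Real.rpow_le_rpow_of_nonpos hu0 hur (by linarith)
          _ ≤ u ^ (-1 - c) := Real.rpow_le_rpow_of_exponent_le hu1 (by linarith)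
      have h2 : (1:ℝ) ≤ v ^ (c - 1) :=
        Real.one_le_rpow_of_pos_of_le_one_of_nonpos hv0 hv1 hce
      calc r ^ (-2 - 2 * c) ≤ u ^ (-1 - c) := h1
        _ = u ^ (-1 - c) * 1 := (mul_one _).symm
        _ ≤ u ^ (-1 - c) * v ^ (c - 1) :=
            mul_le_mul_of_nonneg_left h2 (Real.rpow_nonneg hu0.le _)
    · -- 1 ≤ u, 1 ≤ v
      have hqu : min (u ^ (c - 1)) (u ^ (-1 - c)) = u ^ (-1 - c) :=
        min_eq_right (Real.rpow_le_rpow_of_exponent_le hu1 (by linarith))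
      have hqv : min (v ^ (c - 1)) (v ^ (-1 - c)) = v ^ (-1 - c) :=
        min_eq_right (Real.rpow_le_rpow_of_exponent_le hv1 (by linarith))
      rw [hqu, hqv, ← Real.mul_rpow hu0.le hv0.le]
      calc r ^ (-2 - 2 * c) = (r ^ 2) ^ (-1 - c) := by
            rw [← Real.rpow_natCast r 2, ← Real.rpow_mul hr0.le]
            norm_num
            ring_nf
        _ ≤ (u * v) ^ (-1 - c) :=
            Real.rpow_le_rpow_of_nonpos (by positivity) huv hce'

noncomputable def Pfn (c : ℝ) (w : ℂ) : ℝ := pfn c w.re * pfn c w.im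

lemma integrable_Pfn (hc0 : 0 < c) : Integrable (Pfn c) (volume : Measure ℂ) := by
  have h2 : Integrable (fun z : ℝ × ℝ => pfn c z.1 * pfn c z.2)
      ((volume : Measure ℝ).prod volume) :=
    (integrable_pfn hc0).mul_prod (integrable_pfn hc0)
  rw [← Measure.volume_eq_prod] at h2
  have h3 : Integrable ((fun z : ℝ × ℝ => pfn c z.1 * pfn c z.2) ∘
      Complex.measurableEquivRealProd) (volume : Measure ℂ) :=
    ((Complex.volume_preserving_equiv_real_prod).integrable_comp_emb
      (Complex.measurableEquivRealProd.measurableEmbedding)).mpr h2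
  exact h3

lemma integrable_Pfn_prod (hc0 : 0 < c) :
    Integrable (fun z : Fin 2 → ℂ => Pfn c (z 0) * Pfn c (z 1)) := by
  have := MeasureTheory.Integrable.fintype_prod (𝕜 := ℝ) (f := fun _ : Fin 2 => Pfn c)
    (fun _ => integrable_Pfn hc0)
  exact (by simpa [Fin.prod_univ_two] using this :
    Integrable (fun z : Fin 2 → ℂ => Pfn c (z 0) * Pfn c (z 1)) (Measure.pi fun _ => volume))

lemma volume_re_zero : (volume : Measure ℂ) {w : ℂ | w.re = 0} = 0 := by
  have h : {w : ℂ | w.re = 0} =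
      Complex.measurableEquivRealProd ⁻¹' (({0} : Set ℝ) ×ˢ (Set.univ : Set ℝ)) := by
    ext w
    simp [Complex.measurableEquivRealProd_apply, Set.mem_prod, eq_comm]
  rw [h, Complex.volume_preserving_equiv_real_prod.measure_preimage
    (((measurableSet_singleton (0:ℝ)).prod MeasurableSet.univ).nullMeasurableSet),
    Measure.volume_eq_prod, Measure.prod_prod, Real.volume_singleton, zero_mul]

lemma volume_im_zero : (volume : Measure ℂ) {w : ℂ | w.im = 0} = 0 := by
  have h : {w : ℂ | w.im = 0} =
      Complex.measurableEquivRealProd ⁻¹' ((Set.univ : Set ℝ) ×ˢ ({0} : Set ℝ)) := by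
    ext w
    simp [Complex.measurableEquivRealProd_apply, Set.mem_prod, eq_comm]
  rw [h, Complex.volume_preserving_equiv_real_prod.measure_preimage
    ((MeasurableSet.univ.prod (measurableSet_singleton (0:ℝ))).nullMeasurableSet),
    Measure.volume_eq_prod, Measure.prod_prod, Real.volume_singleton, mul_zero]

lemma ae_coords_ne : ∀ᵐ z : Fin 2 → ℂ, ∀ i : Fin 2, (z i).re ≠ 0 ∧ (z i).im ≠ 0 := by
  rw [MeasureTheory.ae_all_iff]
  intro i
  have hre : ∀ᵐ z : Fin 2 → ℂ, (z i).re ≠ 0 := by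
    rw [ae_iff]
    have : {z : Fin 2 → ℂ | ¬(z i).re ≠ 0} =
        Function.eval i ⁻¹' {w : ℂ | w.re = 0} := by
      ext z; simp [Function.eval]
    rw [this, MeasureTheory.volume_pi]
    exact Measure.pi_eval_preimage_null _ volume_re_zero
  have him : ∀ᵐ z : Fin 2 → ℂ, (z i).im ≠ 0 := by
    rw [ae_iff]
    have : {z : Fin 2 → ℂ | ¬(z i).im ≠ 0} =
        Function.eval i ⁻¹' {w : ℂ | w.im = 0} := by
      ext z; simp [Function.eval]
    rw [this, MeasureTheory.volume_pi]
    exact Measure.pi_eval_preimage_null _ volume_im_zero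
  exact hre.and him


/-- Example 7.4: for the quadrilateral `S = conv{(0,0),(a,0),(b,1−b),(0,1)}` with the
stated parameters, `z₁^k` has finite weighted `L²` norm with weight `e^{−2mH_S}`, but
`(k,0) ∉ mS`. -/
theorem stmt_18 (m : ℕ) (hm : 4 ≤ m) (a b : ℝ)
    (ha0 : 0 < a) (ham : a < 1 / (m : ℝ)) (hab : a < b) (hb1 : b < 1)
    (hmb : (m : ℝ) * (1 - b) < 1)
    (hslope : (b - a) / (1 - b) > (m : ℝ) - 2 - a * m)
    (k : ℕ) (hk1 : 1 ≤ k) (hkm : k ≤ m - 3) :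
    Integrable (fun z : Fin 2 → ℂ =>
        ‖z 0‖ ^ (2 * k) *
          Real.exp (-(2 * (m : ℝ)) *
            HS (convexHull ℝ {![0, 0], ![a, 0], ![b, 1 - b], ![0, 1]}) z)) ∧
      ![(k : ℝ), 0] ∉ (m : ℝ) • convexHull ℝ ({![0, 0], ![a, 0], ![b, 1 - b], ![0, 1]} :
        Set (Fin 2 → ℝ)) := by
  constructor
  · set c := min (1/2 : ℝ) ((1 - (m:ℝ)*(1-b))/2) with hcdef
    have hc0 : 0 < c := lt_min (by norm_num) (by linarith)
    have hc2 : c ≤ 1/2 := min_le_left _ _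
    have hc1 : c ≤ 1 := le_trans hc2 (by norm_num)
    have hcb : (m:ℝ)*(1-b) ≤ 1 - c := by
      have := min_le_right (1/2 : ℝ) ((1 - (m:ℝ)*(1-b))/2)
      linarith
    have hkm' : (k:ℝ) + 3 ≤ m := by
      have h : k + 3 ≤ m := by omega
      exact_mod_cast h
    have hfeq : (fun z : Fin 2 → ℂ =>
          ‖z 0‖ ^ (2 * k) * Real.exp (-(2 * (m : ℝ)) *
            HS (convexHull ℝ {![0, 0], ![a, 0], ![b, 1 - b], ![0, 1]}) z)) =
        (fun z : Fin 2 → ℂ =>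
          ‖z 0‖ ^ (2 * k) * Real.exp (-(2 * (m : ℝ)) *
            max (max 0 (a * Real.log (‖z 0‖)))
              (max (b * Real.log (‖z 0‖) + (1 - b) * Real.log (‖z 1‖))
                (Real.log (‖z 1‖))))) := by
      funext z
      rw [HS, suppFn_hull_eq]
    rw [hfeq]
    have hab0 : Measurable fun z : Fin 2 → ℂ => Real.log (‖z 0‖) :=
      Real.measurable_log.comp (continuous_norm.measurable.comp (measurable_pi_apply 0))
    have hab1 : Measurable fun z : Fin 2 → ℂ => Real.log (‖z 1‖) :=
      Real.measurable_log.comp (continuous_norm.measurable.comp (measurable_pi_apply 1))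
    refine (integrable_Pfn_prod hc0).mono' ?_ ?_
    · refine Measurable.aestronglyMeasurable ?_
      exact ((continuous_norm.measurable.comp (measurable_pi_apply 0)).pow_const _).mul
        ((measurable_const.mul (((measurable_const.max (measurable_const.mul hab0))).max
          (((measurable_const.mul hab0).add (measurable_const.mul hab1)).max hab1))).exp)
    · filter_upwards [ae_coords_ne] with z hz
      obtain ⟨h0re, h0im⟩ := hz 0
      obtain ⟨h1re, h1im⟩ := hz 1
      set x := Real.log (‖z 0‖) with hx
      set y := Real.log (‖z 1‖) with hy
      have hz0 : z 0 ≠ 0 := fun h => h0re (by simp [h])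
      have hr0 : 0 < ‖z 0‖ := norm_pos_iff.mpr hz0
      have hkey := key_ineq m k a b c hb1 ha0 hab hc0 hc2 hcb hm hk1 hkm' x y
      have hnn : (0:ℝ) ≤ ‖z 0‖ ^ (2 * k) *
          Real.exp (-(2 * (m : ℝ)) * max (max 0 (a * x)) (max (b * x + (1 - b) * y) y)) := by
        positivity
      rw [Real.norm_eq_abs, abs_of_nonneg hnn]
      have hpow : ‖z 0‖ ^ (2 * k) = Real.exp ((2 * (k:ℝ)) * x) := by
        rw [← Real.exp_log (pow_pos hr0 (2 * k)), Real.log_pow]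
        congr 1
        push_cast
        ring
      rw [hpow, ← Real.exp_add]
      calc Real.exp ((2 * (k:ℝ)) * x +
              -(2 * (m : ℝ)) * max (max 0 (a * x)) (max (b * x + (1 - b) * y) y))
          ≤ Real.exp ((-2 * x - 2 * c * |x|) + (-2 * y - 2 * c * |y|)) := by
            apply Real.exp_le_exp.mpr
            linarith
        _ = Real.exp (-2 * x - 2 * c * |x|) * Real.exp (-2 * y - 2 * c * |y|) :=
            Real.exp_add _ _
        _ ≤ Pfn c (z 0) * Pfn c (z 1) := by
            apply mul_le_mul (pfn_bound hc0 hc1 (z 0) h0re h0im)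
              (pfn_bound hc0 hc1 (z 1) h1re h1im) (Real.exp_nonneg _)
            exact mul_nonneg (qfn_nonneg c _) (qfn_nonneg c _)
  · exact not_mem_smul m hm a b ha0 ham hab hb1 k hk1
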